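/- There exists a function f : ℕ → ℕ such that the following holds. Let p be a prime and let G be a finite p-group that is not cyclic and that can be covered by m cyclic subgroups (i.e., G is the union of m cyclic subgroups). Then the order of G is at most f(m). -/

import Mathlib

open Subgroup
open scoped commutatorElement


section Helpers

variable {G : Type*} [Group G]

lemma PGCover.ncard_filter_eq {G : Type*} [Fintype G] (P : G → Prop) [DecidablePred P] :
    {g : G | P g}.ncard = (Finset.univ.filter P).card := by
  rw [← Set.ncard_coe_finset]
  congr 1
  ext g
  simp

/-- In a cyclic subgroup of any group, there are at most `n` solutions of `g ^ n = 1`. -/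
lemma PGCover.sol_in_cyclic [Finite G] (C : Subgroup G) (hC : IsCyclic C) {n : ℕ} (hn : 0 < n)
    (S : Set G) (hSC : ∀ g ∈ S, g ∈ C) (hsol : ∀ g ∈ S, g ^ n = 1) : S.ncard ≤ n := by
  classical
  haveI := hC
  letI : Fintype C := Fintype.ofFinite C
  have hbound : (Finset.univ.filter (fun a : C => a ^ n = 1)).card ≤ n :=
    IsCyclic.card_pow_eq_one_le hn
  refine le_trans ?_ hbound
  rw [← Set.ncard_coe_finset]
  refine Set.ncard_le_ncard_of_injOn
    (fun g => if h : g ∈ C then (⟨g, h⟩ : C) else 1) ?_ ?_ (Finset.finite_toSet _)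
  · intro g hg
    show (if h : g ∈ C then (⟨g, h⟩ : C) else 1) ∈ _
    rw [dif_pos (hSC g hg)]
    simp only [Finset.mem_coe, Finset.mem_filter, Finset.mem_univ, true_and]
    exact Subtype.ext (by simpa using hsol g hg)
  · intro a ha b hb hab
    dsimp only at hab
    rw [dif_pos (hSC a ha), dif_pos (hSC b hb)] at hab
    exact congrArg Subtype.val hab

/-- If a group is generated by two commuting elements, it is commutative. -/
lemma PGCover.pair_top_comm {a b : G} (htop : closure ({a, b} : Set G) = ⊤)
    (hab : a * b = b * a) : ∀ x y : G, x * y = y * x := by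
  have hcen : ∀ c : G, a * c = c * a → b * c = c * b → c ∈ Subgroup.center G := by
    intro c hac hbc
    have hle : closure ({a, b} : Set G) ≤ centralizer {c} := by
      rw [closure_le]
      intro z hz
      simp only [Set.mem_insert_iff, Set.mem_singleton_iff] at hz
      rcases hz with rfl | rfl
      · exact mem_centralizer_singleton_iff.mpr hac
      · exact mem_centralizer_singleton_iff.mpr hbc
    rw [Subgroup.mem_center_iff]
    intro g
    have hg : g ∈ centralizer {c} := hle (htop ▸ Subgroup.mem_top g)
    exact mem_centralizer_singleton_iff.mp hg
  have ha : a ∈ Subgroup.center G := hcen a rfl hab.symm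
  have hb : b ∈ Subgroup.center G := hcen b hab rfl
  have hle : closure ({a, b} : Set G) ≤ Subgroup.center G := by
    rw [closure_le]
    intro z hz
    simp only [Set.mem_insert_iff, Set.mem_singleton_iff] at hz
    rcases hz with rfl | rfl
    · exact ha
    · exact hb
  intro x y
  have hx : x ∈ Subgroup.center G := hle (htop ▸ Subgroup.mem_top x)
  exact (Subgroup.mem_center_iff.mp hx y).symm

/-- An "abelian" finite `p`-group with at most `p` solutions of `x ^ p = 1` is cyclic. -/
lemma PGCover.abelian_isCyclic [Finite G] {p : ℕ} (hp : p.Prime) (hG : IsPGroup p G)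
    (hcomm : ∀ a b : G, a * b = b * a)
    (h1 : {g : G | g ^ p = 1}.ncard ≤ p) : IsCyclic G := by
  classical
  haveI : Fact p.Prime := ⟨hp⟩
  letI : Fintype G := Fintype.ofFinite G
  have h1' : (Finset.univ.filter (fun a : G => a ^ p = 1)).card ≤ p := by
    rw [← PGCover.ncard_filter_eq]; exact h1
  have key : ∀ k : ℕ, (Finset.univ.filter (fun a : G => a ^ (p ^ k) = 1)).card ≤ p ^ k := by
    intro k
    induction k with
    | zero =>
      have hsub : (Finset.univ.filter (fun a : G => a ^ (p ^ 0) = 1)) ⊆ {1} := by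
        intro a ha
        obtain ⟨-, ha⟩ := Finset.mem_filter.mp ha
        rw [pow_zero, pow_one] at ha
        simp [ha]
      exact le_trans (Finset.card_le_card hsub) (by simp)
    | succ k ih =>
      set s := Finset.univ.filter (fun a : G => a ^ (p ^ (k + 1)) = 1) with hs
      have hcard : s.card ≤ p ^ k * (s.image (fun a => a ^ (p ^ k))).card := by
        refine Finset.card_le_mul_card_image s (p ^ k) ?_
        intro b hb
        obtain ⟨a₀, ha₀s, hfa₀⟩ := Finset.mem_image.mp hb
        refine le_trans (Finset.card_le_card_of_injOn (fun a => a * a₀⁻¹) ?_ ?_) ih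
        · intro a ha
          obtain ⟨has, hfa⟩ := Finset.mem_filter.mp ha
          have hcom : Commute a a₀⁻¹ := hcomm a a₀⁻¹
          simp only [Finset.mem_coe, Finset.mem_filter, Finset.mem_univ, true_and]
          calc (a * a₀⁻¹) ^ p ^ k = a ^ p ^ k * (a₀⁻¹) ^ p ^ k := hcom.mul_pow _
            _ = b * (a₀ ^ p ^ k)⁻¹ := by rw [hfa, inv_pow]
            _ = b * b⁻¹ := by rw [hfa₀]
            _ = 1 := by simp
        · intro x hx y hy hxy
          exact mul_right_cancel hxy
      have himg : s.image (fun a => a ^ (p ^ k)) ⊆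
          Finset.univ.filter (fun b : G => b ^ p = 1) := by
        intro b hb
        obtain ⟨a, has, rfl⟩ := Finset.mem_image.mp hb
        have ha : a ^ (p ^ (k + 1)) = 1 := (Finset.mem_filter.mp has).2
        simp only [Finset.mem_filter, Finset.mem_univ, true_and]
        rw [← pow_mul, ← pow_succ]
        exact ha
      calc s.card ≤ p ^ k * (s.image (fun a => a ^ (p ^ k))).card := hcard
        _ ≤ p ^ k * p := Nat.mul_le_mul_left _ (le_trans (Finset.card_le_card himg) h1')
        _ = p ^ (k + 1) := (pow_succ p k).symm
  refine isCyclic_of_card_pow_eq_one_le ?_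
  intro n hn
  have hdvd : p ^ (n.factorization p) ∣ n := Nat.ordProj_dvd n p
  have hsub : (Finset.univ.filter fun a : G => a ^ n = 1) ⊆
      Finset.univ.filter fun a : G => a ^ (p ^ (n.factorization p)) = 1 := by
    intro a ha
    obtain ⟨-, han⟩ := Finset.mem_filter.mp ha
    obtain ⟨k, hk⟩ := IsPGroup.iff_orderOf.mp hG a
    have hkd : p ^ k ∣ n := hk ▸ orderOf_dvd_of_pow_eq_one han
    have hkL : k ≤ n.factorization p :=
      (Nat.Prime.pow_dvd_iff_le_factorization hp hn.ne').mp hkd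
    simp only [Finset.mem_filter, Finset.mem_univ, true_and]
    exact orderOf_dvd_iff_pow_eq_one.mp (hk ▸ pow_dvd_pow p hkL)
  exact le_trans (Finset.card_le_card hsub)
    (le_trans (key _) (Nat.le_of_dvd hn hdvd))

end Helpers


section ClaimU

/-- Image of a cyclic subgroup is cyclic. -/
lemma PGCover.isCyclic_map {G H : Type*} [Group G] [Group H] (f : G →* H) (K : Subgroup G)
    (hK : IsCyclic K) : IsCyclic (Subgroup.map f K) :=
  isCyclic_of_surjective (f.subgroupMap K) (f.subgroupMap_surjective K)

variable {H : Type*} [Group H] [Finite H]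

/-- A subgroup whose cardinality is at least that of the whole group is the whole group. -/
lemma PGCover.eq_of_le_of_card_le {K L : Subgroup H} (h : K ≤ L) (hc : Nat.card L ≤ Nat.card K) :
    K = L := by
  classical
  letI : Fintype H := Fintype.ofFinite H
  have hsub : (K : Set H) ⊆ (L : Set H) := h
  have : (K : Set H) = (L : Set H) := by
    apply Set.eq_of_subset_of_ncard_le hsub
    rwa [← Nat.card_coe_set_eq, ← Nat.card_coe_set_eq]
  exact SetLike.ext' this
end ClaimU

section ClaimU2


/-- **Claim U**: a finite `p`-group with at most `p` solutions of `x ^ p = 1` and at most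
`p ^ 2` solutions of `x ^ (p ^ 2) = 1` is cyclic. -/
lemma PGCover.claimU {p : ℕ} (hp : p.Prime) :
    ∀ (N : ℕ) (H : Type) (_ : Group H) (_ : Finite H), Nat.card H ≤ N →
      IsPGroup p H → {g : H | g ^ p = 1}.ncard ≤ p →
      {g : H | g ^ (p ^ 2) = 1}.ncard ≤ p ^ 2 → IsCyclic H := by
  intro N
  induction N with
  | zero =>
    intro H _ _ hcard _ _ _
    have := Nat.card_pos (α := H)
    omega
  | succ N ih =>
    intro H _ _ hcard hpg h1 h2
    by_contra hnc
    haveI : Fact p.Prime := ⟨hp⟩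
    -- proper subgroups are cyclic
    have hproper : ∀ K : Subgroup H, K ≠ ⊤ → IsCyclic K := by
      intro K hK
      have hlt : Nat.card K < Nat.card H := by
        have hle : Nat.card K ≤ Nat.card H := Subgroup.card_le_card_group K
        rcases lt_or_eq_of_le hle with h | h
        · exact h
        · exact absurd (Subgroup.eq_top_of_card_eq K h) hK
      have htrans : ∀ n : ℕ, 0 < n →
          {g : ↥K | g ^ n = 1}.ncard ≤ {g : H | g ^ n = 1}.ncard := by
        intro n hn
        refine Set.ncard_le_ncard_of_injOn (fun g => (g : H)) ?_ ?_ (Set.toFinite _)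
        · intro g hg
          simp only [Set.mem_setOf_eq] at hg ⊢
          have := congrArg (Subtype.val) hg
          simpa using this
        · intro a _ b _ hab
          exact Subtype.ext hab
      exact ih ↥K inferInstance inferInstance (by omega) (hpg.to_subgroup K)
        (le_trans (htrans p hp.pos) h1)
        (le_trans (htrans (p ^ 2) (pow_pos hp.pos 2)) h2)
    -- H is not abelian
    have hNA : ¬ ∀ a b : H, a * b = b * a := fun hcomm =>
      hnc (PGCover.abelian_isCyclic hp hpg hcomm h1)
    -- element of maximal order
    obtain ⟨u, hu⟩ : ∃ u : H, ∀ g : H, orderOf g ≤ orderOf u := by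
      classical
      letI : Fintype H := Fintype.ofFinite H
      obtain ⟨u, -, hu⟩ := Finset.exists_max_image (Finset.univ : Finset H) orderOf
        ⟨1, Finset.mem_univ 1⟩
      exact ⟨u, fun g => hu g (Finset.mem_univ g)⟩
    obtain ⟨c, hc⟩ := IsPGroup.iff_orderOf.mp hpg u
    set M : Subgroup H := zpowers u with hM
    have hMcard : Nat.card M = p ^ c := by rw [hM, Nat.card_zpowers, hc]
    have hMne : M ≠ ⊤ := by
      intro h
      refine hnc ⟨⟨u, fun g => ?_⟩⟩
      have hg : g ∈ M := by rw [h]; exact Subgroup.mem_top g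
      exact hg
    -- v ∉ M → closure {u, v} = ⊤
    have hKtop : ∀ v : H, v ∉ M → closure ({u, v} : Set H) = ⊤ := by
      intro v hv
      by_contra hKne
      have hKcyc := hproper _ hKne
      set K := closure ({u, v} : Set H) with hK
      have huK : u ∈ K := Subgroup.subset_closure (by simp)
      have hvK : v ∈ K := Subgroup.subset_closure (by simp)
      obtain ⟨γ, hγ⟩ := hKcyc.exists_generator
      have hγtop : zpowers γ = (⊤ : Subgroup K) := by
        rw [Subgroup.eq_top_iff']; exact hγ
      have hcardK : Nat.card K = orderOf (γ : H) := by
        rw [← Subgroup.card_top (G := ↥K), ← hγtop, Nat.card_zpowers, orderOf_coe]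
      have hKle : Nat.card K ≤ Nat.card M := by
        rw [hcardK, hMcard, ← hc]; exact hu _
      have : M = K := PGCover.eq_of_le_of_card_le (Subgroup.zpowers_le.mpr huK) hKle
      exact hv (this ▸ hvK)
    -- centralizer of u is M
    have hcent : ∀ g : H, g ∈ centralizer {u} → g ∈ M := by
      intro g hg
      by_contra hgM
      exact hNA (PGCover.pair_top_comm (hKtop g hgM)
        (mem_centralizer_singleton_iff.mp hg).symm)
    have hZM : Subgroup.center H ≤ M := fun z hz =>
      hcent z (Subgroup.center_le_centralizer {u} hz)
    -- all orders divide p ^ c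
    have hdiv : ∀ g : H, g ^ (p ^ c) = 1 := by
      intro g
      obtain ⟨k, hk⟩ := IsPGroup.iff_orderOf.mp hpg g
      have hkc : k ≤ c := by
        have := hu g
        rw [hk, hc] at this
        exact (Nat.pow_le_pow_iff_right hp.one_lt).mp this
      exact orderOf_dvd_iff_pow_eq_one.mp (hk ▸ pow_dvd_pow p hkc)
    -- c ≥ 2
    have hc2 : 2 ≤ c := by
      by_contra hlt
      push_neg at hlt
      have hall : {g : H | g ^ p = 1} = Set.univ := by
        ext g
        simp only [Set.mem_setOf_eq, Set.mem_univ, iff_true]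
        have h1 := hdiv g
        have : p ^ c ∣ p := by
          calc p ^ c ∣ p ^ 1 := pow_dvd_pow p (by omega)
            _ = p := pow_one p
        obtain ⟨d, hd⟩ := this
        calc g ^ p = g ^ (p ^ c * d) := by rw [← hd]
          _ = (g ^ (p ^ c)) ^ d := by rw [pow_mul]
          _ = 1 := by rw [h1, one_pow]
      have hcardle : Nat.card H ≤ p := by
        rw [← Set.ncard_univ, ← hall]; exact h1
      obtain ⟨n, hn⟩ := IsPGroup.iff_card.mp hpg
      have : Nat.card H ∣ p := by
        rw [hn]
        have hnle : n ≤ 1 := by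
          by_contra hgt
          push_neg at hgt
          have : p ^ 2 ≤ p ^ n := Nat.pow_le_pow_right hp.pos hgt
          nlinarith [hp.two_le, hn ▸ hcardle]
        calc p ^ n ∣ p ^ 1 := pow_dvd_pow p hnle
          _ = p := pow_one p
      exact hnc (isCyclic_of_card_dvd_prime this)
    -- solutions of X^(p^2) = 1 lie in M
    have hM2 : ∀ g : H, g ^ (p ^ 2) = 1 → g ∈ M := by
      intro g hg
      by_contra hgM
      set u2 := u ^ (p ^ (c - 2)) with hu2
      have hord2 : orderOf u2 = p ^ 2 := by
        rw [hu2, orderOf_pow, hc, Nat.gcd_eq_right (pow_dvd_pow p (by omega)),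
          Nat.pow_div (by omega) hp.pos]
        congr 1
        omega
      have hsub : (insert g ((fun s : ℕ => u2 ^ s) '' Set.Iio (p ^ 2)))
          ⊆ {h : H | h ^ (p ^ 2) = 1} := by
        intro h hh
        rcases Set.mem_insert_iff.mp hh with rfl | ⟨s, _, rfl⟩
        · exact hg
        · simp only [Set.mem_setOf_eq]
          rw [← pow_mul, mul_comm, pow_mul, ← hord2, pow_orderOf_eq_one, one_pow]
      have hginj : Set.InjOn (fun s : ℕ => u2 ^ s) (Set.Iio (p ^ 2)) := by
        rw [← hord2]; exact pow_injOn_Iio_orderOf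
      have hgnotin : g ∉ (fun s : ℕ => u2 ^ s) '' Set.Iio (p ^ 2) := by
        rintro ⟨s, -, rfl⟩
        exact hgM (Subgroup.pow_mem _ (Subgroup.pow_mem _ (Subgroup.mem_zpowers u) _) _)
      have hbig : p ^ 2 + 1 ≤ {h : H | h ^ (p ^ 2) = 1}.ncard := by
        have h1 : ((fun s : ℕ => u2 ^ s) '' Set.Iio (p ^ 2)).ncard = p ^ 2 := by
          rw [Set.ncard_image_of_injOn hginj, ← Finset.coe_Iio, Set.ncard_coe_finset,
            Nat.card_Iio]
        have h2' : (insert g ((fun s : ℕ => u2 ^ s) '' Set.Iio (p ^ 2))).ncard = p ^ 2 + 1 := by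
          rw [Set.ncard_insert_of_notMem hgnotin (Set.toFinite _), h1]
        rw [← h2']
        exact Set.ncard_le_ncard hsub (Set.toFinite _)
      omega
    -- minimal order element outside M
    obtain ⟨v, hvM, hvmin⟩ : ∃ v : H, v ∉ M ∧ ∀ g : H, g ∉ M → orderOf v ≤ orderOf g := by
      classical
      letI : Fintype H := Fintype.ofFinite H
      have hne : (Finset.univ.filter (fun g : H => g ∉ M)).Nonempty := by
        obtain ⟨w0, hw0⟩ : ∃ w0 : H, w0 ∉ M := by
          by_contra hcon
          push_neg at hcon
          exact hMne ((Subgroup.eq_top_iff' M).mpr hcon)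
        exact ⟨w0, by simp [hw0]⟩
      obtain ⟨v, hv, hmin⟩ := Finset.exists_min_image _ orderOf hne
      rw [Finset.mem_filter] at hv
      exact ⟨v, hv.2, fun g hg => hmin g (by simp [hg])⟩
    obtain ⟨b, hb⟩ := IsPGroup.iff_orderOf.mp hpg v
    have hbpos : 1 ≤ b := by
      rcases Nat.eq_zero_or_pos b with h0 | h1
      · exfalso
        apply hvM
        have hv1 : v = 1 := orderOf_eq_one_iff.mp (by rw [hb, h0, pow_zero])
        rw [hv1]
        exact Subgroup.one_mem M
      · exact h1
    -- v ^ p ∈ M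
    have hvp : v ^ p ∈ M := by
      by_contra hvpM
      have hle := hvmin _ hvpM
      have hord : orderOf (v ^ p) = p ^ (b - 1) := by
        rw [orderOf_pow, hb, Nat.gcd_eq_right (dvd_pow_self p (by omega))]
        have hb' : p ^ b = p ^ (b - 1) * p := by
          rw [← pow_succ]
          congr 1
          omega
        rw [hb', Nat.mul_div_cancel _ hp.pos]
      rw [hb, hord] at hle
      have := Nat.pow_lt_pow_right hp.one_lt (show b - 1 < b by omega)
      omega
    -- v ^ p is central
    have hvpc : v ^ p ∈ Subgroup.center H := by
      rw [Subgroup.mem_center_iff]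
      intro g
      have hle : closure ({u, v} : Set H) ≤ centralizer {v ^ p} := by
        rw [closure_le]
        intro z hz
        simp only [Set.mem_insert_iff, Set.mem_singleton_iff] at hz
        rcases hz with rfl | rfl
        · rw [SetLike.mem_coe, mem_centralizer_singleton_iff]
          obtain ⟨n, hn⟩ := Subgroup.mem_zpowers_iff.mp hvp
          rw [← hn]
          exact (Commute.zpow_right (Commute.refl z) n).eq
        · rw [SetLike.mem_coe, mem_centralizer_singleton_iff]
          exact ((Commute.refl z).pow_right p).eq
      have hg2 : g ∈ centralizer {v ^ p} :=
        hle (by rw [hKtop v hvM]; exact Subgroup.mem_top g)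
      exact mem_centralizer_singleton_iff.mp hg2
    -- commutators are central
    have hQcomm : ∀ a b0 : H, ⁅a, b0⁆ ∈ Subgroup.center H := by
      set Z := Subgroup.center H with hZ
      set π : H →* H ⧸ Z := QuotientGroup.mk' Z with hπ
      have hπsurj : Function.Surjective π := QuotientGroup.mk'_surjective Z
      have hkerπ : π.ker = Z := QuotientGroup.ker_mk' Z
      have hπtop : closure ({π u, π v} : Set (H ⧸ Z)) = ⊤ := by
        have h' := congrArg (Subgroup.map π) (hKtop v hvM)
        rw [MonoidHom.map_closure, Set.image_insert_eq, Set.image_singleton,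
          Subgroup.map_top_of_surjective π hπsurj] at h'
        exact h'
      have hQab : ∀ x y : H ⧸ Z, x * y = y * x := by
        by_contra hQNA
        have hQnc : ¬ IsCyclic (H ⧸ Z) := by
          intro hcyc
          exact hNA fun a b0 => commutative_of_cyclic_center_quotient π (le_of_eq hkerπ) a b0
        haveI : Nontrivial (H ⧸ Z) := by
          rcases subsingleton_or_nontrivial (H ⧸ Z) with hs | hn
          · exact absurd isCyclic_of_subsingleton hQnc
          · exact hn
        haveI hQpg : IsPGroup p (H ⧸ Z) := hpg.to_quotient Z
        haveI := hQpg.center_nontrivial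
        obtain ⟨q0, hq0ne⟩ := exists_ne (1 : Subgroup.center (H ⧸ Z))
        obtain ⟨γq, hγq⟩ := IsPGroup.iff_orderOf.mp hQpg (q0 : H ⧸ Z)
        have hγpos : 1 ≤ γq := by
          rcases Nat.eq_zero_or_pos γq with h0 | h1
          · exfalso
            apply hq0ne
            have hq01 : (q0 : H ⧸ Z) = 1 := orderOf_eq_one_iff.mp (by rw [hγq, h0, pow_zero])
            exact Subtype.ext hq01
          · exact h1
        set q : H ⧸ Z := (q0 : H ⧸ Z) ^ (p ^ (γq - 1)) with hqdef
        have hqc : q ∈ Subgroup.center (H ⧸ Z) := Subgroup.pow_mem _ q0.2 _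
        have hqord : orderOf q = p := by
          rw [hqdef, orderOf_pow, hγq, Nat.gcd_eq_right (pow_dvd_pow p (by omega)),
            Nat.pow_div (by omega) hp.pos, show γq - (γq - 1) = 1 by omega, pow_one]
        set vb : H ⧸ Z := π v with hvb
        have hvbp : vb ^ p = 1 := by
          rw [hvb, ← map_pow, ← MonoidHom.mem_ker, hkerπ]
          exact hvpc
        have hvbne : vb ≠ 1 := by
          intro h
          have hvZ : v ∈ Z := by
            rw [← hkerπ, MonoidHom.mem_ker]
            exact h
          exact hvM (hZM hvZ)
        by_cases hvq : vb ∈ zpowers q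
        · have hvbc : vb ∈ Subgroup.center (H ⧸ Z) := by
            obtain ⟨n, hn⟩ := Subgroup.mem_zpowers_iff.mp hvq
            rw [← hn]
            exact Subgroup.zpow_mem _ hqc _
          exact hQNA (PGCover.pair_top_comm hπtop
            (Subgroup.mem_center_iff.mp hvbc (π u)))
        · set Kb := closure ({q, vb} : Set (H ⧸ Z)) with hKb
          have hqKb : q ∈ Kb := Subgroup.subset_closure (by simp)
          have hvbKb : vb ∈ Kb := Subgroup.subset_closure (by simp)
          have hqvb : q * vb = vb * q := (Subgroup.mem_center_iff.mp hqc vb).symm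
          by_cases hKtop2 : Subgroup.comap π Kb = ⊤
          · have hKbtop : Kb = ⊤ := by
              have h' := congrArg (Subgroup.map π) hKtop2
              rw [Subgroup.map_comap_eq_self_of_surjective hπsurj,
                Subgroup.map_top_of_surjective π hπsurj] at h'
              exact h'
            exact hQNA (PGCover.pair_top_comm hKbtop hqvb)
          · have hKcyc : IsCyclic (Subgroup.comap π Kb) := hproper _ hKtop2
            have hKbcyc : IsCyclic Kb := by
              have h' := PGCover.isCyclic_map π _ hKcyc
              rwa [Subgroup.map_comap_eq_self_of_surjective hπsurj] at h'
            have hsolKb : (insert vb ((fun s : ℕ => q ^ s) '' Set.Iio p)).ncard ≤ p := by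
              refine PGCover.sol_in_cyclic Kb hKbcyc hp.pos _ ?_ ?_
              · intro g hg
                rcases Set.mem_insert_iff.mp hg with rfl | ⟨s, -, rfl⟩
                · exact hvbKb
                · exact Subgroup.pow_mem _ hqKb _
              · intro g hg
                rcases Set.mem_insert_iff.mp hg with rfl | ⟨s, -, rfl⟩
                · exact hvbp
                · rw [← pow_mul, mul_comm, pow_mul, ← hqord, pow_orderOf_eq_one, one_pow]
            have hinj : Set.InjOn (fun s : ℕ => q ^ s) (Set.Iio p) := by
              rw [← hqord]
              exact pow_injOn_Iio_orderOf
            have hnotin : vb ∉ (fun s : ℕ => q ^ s) '' Set.Iio p := by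
              rintro ⟨s, -, hs⟩
              apply hvq
              rw [← hs]
              exact Subgroup.pow_mem _ (Subgroup.mem_zpowers q) s
            have hcard : (insert vb ((fun s : ℕ => q ^ s) '' Set.Iio p)).ncard = p + 1 := by
              rw [Set.ncard_insert_of_notMem hnotin (Set.toFinite _),
                Set.ncard_image_of_injOn hinj, ← Finset.coe_Iio, Set.ncard_coe_finset,
                Nat.card_Iio]
            omega
      intro a b0
      have hker : ⁅a, b0⁆ ∈ π.ker := by
        rw [MonoidHom.mem_ker, map_commutatorElement, commutatorElement_def,
          hQab (π a) (π b0)]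
        group
      rwa [hkerπ] at hker
    -- write v ^ p as a power of u
    obtain ⟨n0, hn0⟩ : ∃ n : ℕ, u ^ n = v ^ p := by
      have h := hvp
      rw [hM, ← mem_powers_iff_mem_zpowers] at h
      exact (Submonoid.mem_powers_iff _ _).mp h
    have hpn : p ∣ n0 := by
      by_contra hnd
      have hcop : Nat.Coprime (p ^ c) n0 :=
        Nat.Coprime.pow_left c ((Nat.Prime.coprime_iff_not_dvd hp).mpr hnd)
      have hordn : orderOf (u ^ n0) = p ^ c := by
        rw [orderOf_pow, hc, hcop.gcd_eq_one, Nat.div_one]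
      have hA : zpowers (u ^ n0) = M := by
        refine PGCover.eq_of_le_of_card_le ?_ ?_
        · exact Subgroup.zpowers_le.mpr (Subgroup.pow_mem _ (Subgroup.mem_zpowers u) _)
        · rw [Nat.card_zpowers (u ^ n0),
            hordn, hMcard]
      have hMv : M ≤ zpowers v := by
        rw [← hA, hn0]
        exact Subgroup.zpowers_le.mpr (Subgroup.pow_mem _ (Subgroup.mem_zpowers v) _)
      have hveq : M = zpowers v := by
        refine PGCover.eq_of_le_of_card_le hMv ?_
        rw [Nat.card_zpowers, hMcard, ← hc]
        exact hu v
      exact hvM (hveq ▸ Subgroup.mem_zpowers v)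
    -- final computation
    set k0 := n0 / p with hk0
    have hn0k : p * k0 = n0 := Nat.mul_div_cancel' hpn
    set s : H := (u ^ k0)⁻¹ with hsdef
    set w := v * s with hwdef
    have hwM : w ∉ M := by
      intro hwm
      apply hvM
      have hveq : v = w * u ^ k0 := by
        rw [hwdef, hsdef]
        group
      rw [hveq]
      exact Subgroup.mul_mem _ hwm (Subgroup.pow_mem _ (Subgroup.mem_zpowers u) _)
    set cc : H := s⁻¹ * v⁻¹ * s * v with hccdef
    have hccZ : cc ∈ Subgroup.center H := by
      have h := hQcomm s⁻¹ v⁻¹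
      have he : ⁅s⁻¹, v⁻¹⁆ = cc := by
        rw [hccdef, commutatorElement_def]
        group
      rwa [he] at h
    have hccm : ∀ x : H, Commute x cc := fun x =>
      (Subgroup.mem_center_iff.mp hccZ x)
    have hsv : s * v = v * s * cc := by
      rw [hccdef]
      group
    have hsnv : ∀ n : ℕ, s ^ n * v = v * s ^ n * cc ^ n := by
      intro n
      induction n with
      | zero => simp
      | succ n ihn =>
        calc s ^ (n + 1) * v = s * (s ^ n * v) := by
              rw [pow_succ', mul_assoc]
          _ = s * (v * s ^ n * cc ^ n) := by rw [ihn]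
          _ = (s * v) * (s ^ n * cc ^ n) := by
              simp only [mul_assoc]
          _ = (v * s * cc) * (s ^ n * cc ^ n) := by rw [hsv]
          _ = v * s * ((cc * s ^ n) * cc ^ n) := by
              simp only [mul_assoc]
          _ = v * s * ((s ^ n * cc) * cc ^ n) := by
              rw [(hccm (s ^ n)).eq]
          _ = v * (s * s ^ n) * (cc * cc ^ n) := by
              simp only [mul_assoc]
          _ = v * s ^ (n + 1) * cc ^ (n + 1) := by
              rw [← pow_succ', ← pow_succ']
    have hwpow : ∀ n : ℕ, w ^ n = v ^ n * s ^ n * cc ^ (n.choose 2) := by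
      intro n
      induction n with
      | zero => simp
      | succ n ihn =>
        have hch : (n + 1).choose 2 = n.choose 2 + n := by
          rw [Nat.choose_succ_succ, Nat.choose_one_right]
          exact Nat.add_comm n (n.choose 2)
        calc w ^ (n + 1) = w ^ n * w := pow_succ w n
          _ = (v ^ n * s ^ n * cc ^ n.choose 2) * (v * s) := by rw [ihn, hwdef]
          _ = v ^ n * s ^ n * (cc ^ n.choose 2 * v) * s := by
              simp only [mul_assoc]
          _ = v ^ n * s ^ n * (v * cc ^ n.choose 2) * s := by
              rw [((hccm v).pow_right (n.choose 2)).eq]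
          _ = v ^ n * (s ^ n * v) * (cc ^ n.choose 2 * s) := by
              simp only [mul_assoc]
          _ = v ^ n * (v * s ^ n * cc ^ n) * (s * cc ^ n.choose 2) := by
              rw [hsnv, ((hccm s).pow_right (n.choose 2)).eq]
          _ = v ^ n * v * (s ^ n * (cc ^ n * s) * cc ^ n.choose 2) := by
              simp only [mul_assoc]
          _ = v ^ n * v * (s ^ n * (s * cc ^ n) * cc ^ n.choose 2) := by
              rw [((hccm s).pow_right n).eq]
          _ = (v ^ n * v) * (s ^ n * s) * (cc ^ n * cc ^ n.choose 2) := by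
              simp only [mul_assoc]
          _ = v ^ (n + 1) * s ^ (n + 1) * cc ^ ((n + 1).choose 2) := by
              rw [← pow_succ, ← pow_succ, ← pow_add, hch, Nat.add_comm (n.choose 2) n]
    have hsp : s ^ p = (v ^ p)⁻¹ := by
      rw [hsdef, inv_pow, ← pow_mul, Nat.mul_comm, hn0k, hn0]
    have hccp : cc ^ p = 1 := by
      have h1 := hsnv p
      have h2 : s ^ p * v = v * s ^ p := by
        rw [hsp]
        group
      rw [h2] at h1
      have h3 : v * s ^ p * 1 = v * s ^ p * cc ^ p := by
        rw [mul_one]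
        exact h1
      exact (mul_left_cancel h3).symm
    have hwp2 : w ^ (p ^ 2) = 1 := by
      have h1 : w ^ p = cc ^ (p.choose 2) := by
        rw [hwpow p, hsp]
        group
      rw [pow_two, pow_mul, h1, ← pow_mul, Nat.mul_comm, pow_mul, hccp, one_pow]
    exact hwM (hM2 w hwp2)

end ClaimU2



/-- The antichain bound. -/
lemma PGCover.antichain {G : Type*} [Group G] [Finite G] {p m e β : ℕ} (hp : p.Prime)
    (C : Fin m → Subgroup G) (hcyc : ∀ i, IsCyclic (C i))
    (hcover : ∀ g : G, ∃ i, g ∈ C i)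
    {x : G} (hx : orderOf x = p ^ e)
    (hβ : 0 < β) (hβe : β ≤ e)
    {w : G} (hw : w ^ (p ^ β) = 1) (hwV : w ∉ zpowers (x ^ (p ^ (e - β)))) :
    e + 1 ≤ m + β := by
  classical
  choose idx hidx using hcover
  have hinjkey : ∀ j k : ℕ, j < k → k ≤ e - β →
      idx (x ^ (p ^ j) * w) ≠ idx (x ^ (p ^ k) * w) := by
    intro j k hjk hk heq
    set i := idx (x ^ (p ^ k) * w) with hi
    have hTk : x ^ (p ^ k) * w ∈ C i := hidx _
    have hTj : x ^ (p ^ j) * w ∈ C i := heq ▸ hidx (x ^ (p ^ j) * w)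
    have hle : p ^ j ≤ p ^ k := Nat.pow_le_pow_right hp.pos (le_of_lt hjk)
    -- x ^ (p ^ k - p ^ j) ∈ C i
    have hd : x ^ (p ^ k - p ^ j) ∈ C i := by
      have h1 : (x ^ (p ^ k) * w) * (x ^ (p ^ j) * w)⁻¹ ∈ C i :=
        Subgroup.mul_mem _ hTk (Subgroup.inv_mem _ hTj)
      have h2 : (x ^ (p ^ k) * w) * (x ^ (p ^ j) * w)⁻¹ = x ^ (p ^ k - p ^ j) := by
        have h3 : x ^ (p ^ k) = x ^ (p ^ k - p ^ j) * x ^ (p ^ j) := by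
          rw [← pow_add]
          congr 1
          omega
        rw [h3]
        group
      rwa [h2] at h1
    -- gcd computation
    have hfac : p ^ k - p ^ j = p ^ j * (p ^ (k - j) - 1) := by
      rw [Nat.mul_sub, mul_one, ← pow_add]
      congr 2
      omega
    have hcop : Nat.Coprime (p ^ (k - j) - 1) (p ^ (e - j)) := by
      apply Nat.Coprime.pow_right
      have hone : 1 ≤ p ^ (k - j) := Nat.one_le_pow _ _ hp.pos
      have hdvd1 : ¬ p ∣ (p ^ (k - j) - 1) := by
        intro hdvd
        have h1 : p ∣ p ^ (k - j) := dvd_pow_self p (by omega)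
        have h2 : p ∣ 1 := by
          have := Nat.dvd_sub h1 hdvd
          rwa [Nat.sub_sub_self hone] at this
        have h3 := Nat.dvd_one.mp h2
        have h4 := hp.one_lt
        omega
      exact Nat.coprime_comm.mp ((Nat.Prime.coprime_iff_not_dvd hp).mpr hdvd1)
    have hgcd : Nat.gcd (p ^ k - p ^ j) (p ^ e) = p ^ j := by
      rw [hfac, show p ^ e = p ^ j * p ^ (e - j) by rw [← pow_add]; congr 1; omega,
        Nat.gcd_mul_left, hcop.gcd_eq_one, mul_one]
    -- Bezout: x ^ (p ^ j) ∈ C i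
    have hxj : x ^ (p ^ j) ∈ C i := by
      set d : ℕ := p ^ k - p ^ j with hdd
      have hbez : ((p ^ j : ℕ) : ℤ) =
          (d : ℤ) * Int.gcdA (d : ℤ) ((p ^ e : ℕ) : ℤ) +
          ((p ^ e : ℕ) : ℤ) * Int.gcdB (d : ℤ) ((p ^ e : ℕ) : ℤ) := by
        rw [← Int.gcd_eq_gcd_ab]
        rw [Int.gcd_natCast_natCast, hdd, hgcd]
      have hmem : x ^ (((p ^ j : ℕ) : ℤ)) ∈ C i := by
        rw [hbez, zpow_add, zpow_mul, zpow_mul]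
        apply Subgroup.mul_mem
        · apply Subgroup.zpow_mem
          rw [zpow_natCast]
          exact hd
        · apply Subgroup.zpow_mem
          rw [zpow_natCast]
          have hxe1 : x ^ (p ^ e) = 1 := by rw [← hx, pow_orderOf_eq_one]
          rw [hxe1]
          exact Subgroup.one_mem _
      rwa [zpow_natCast] at hmem
    have hwC : w ∈ C i := by
      have h1 := Subgroup.mul_mem _ (Subgroup.inv_mem _ hxj) hTj
      rwa [inv_mul_cancel_left] at h1
    have hxe : x ^ (p ^ (e - β)) ∈ C i := by
      have h1 : x ^ (p ^ (e - β)) = (x ^ (p ^ j)) ^ (p ^ (e - β - j)) := by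
        rw [← pow_mul, ← pow_add]
        congr 2
        omega
      rw [h1]
      exact Subgroup.pow_mem _ hxj _
    set x2 := x ^ (p ^ (e - β)) with hx2
    have hordx2 : orderOf x2 = p ^ β := by
      rw [hx2, orderOf_pow, hx, Nat.gcd_eq_right (pow_dvd_pow p (by omega)),
        Nat.pow_div (by omega) hp.pos, show e - (e - β) = β by omega]
    have hsol : (insert w ((fun s : ℕ => x2 ^ s) '' Set.Iio (p ^ β))).ncard ≤ p ^ β := by
      refine PGCover.sol_in_cyclic (C i) (hcyc i) (pow_pos hp.pos β) _ ?_ ?_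
      · intro g hg
        rcases Set.mem_insert_iff.mp hg with rfl | ⟨s, -, hs⟩
        · exact hwC
        · rw [← hs]
          exact Subgroup.pow_mem _ hxe _
      · intro g hg
        rcases Set.mem_insert_iff.mp hg with rfl | ⟨s, -, hs⟩
        · exact hw
        · rw [← hs]
          show (x2 ^ s) ^ (p ^ β) = 1
          rw [← pow_mul, mul_comm, pow_mul, ← hordx2, pow_orderOf_eq_one, one_pow]
    have hinj2 : Set.InjOn (fun s : ℕ => x2 ^ s) (Set.Iio (p ^ β)) := by
      rw [← hordx2]
      exact pow_injOn_Iio_orderOf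
    have hnotin2 : w ∉ (fun s : ℕ => x2 ^ s) '' Set.Iio (p ^ β) := by
      rintro ⟨s, -, hs⟩
      apply hwV
      rw [← hs]
      exact Subgroup.pow_mem _ (Subgroup.mem_zpowers x2) s
    have hcardeq : (insert w ((fun s : ℕ => x2 ^ s) '' Set.Iio (p ^ β))).ncard = p ^ β + 1 := by
      rw [Set.ncard_insert_of_notMem hnotin2 (Set.toFinite _),
        Set.ncard_image_of_injOn hinj2, ← Finset.coe_Iio, Set.ncard_coe_finset, Nat.card_Iio]
    omega
  have hcount : e - β + 1 ≤ m := by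
    have hmap : ∀ j ∈ Finset.Iio (e - β + 1),
        idx (x ^ (p ^ j) * w) ∈ (Finset.univ : Finset (Fin m)) := fun j _ => Finset.mem_univ _
    have hinj : Set.InjOn (fun j => idx (x ^ (p ^ j) * w)) (Finset.Iio (e - β + 1)) := by
      intro j hj k hk heq
      simp only [Finset.coe_Iio, Set.mem_Iio] at hj hk
      by_contra hne
      rcases Nat.lt_or_ge j k with h | h
      · exact hinjkey j k h (by omega) heq
      · exact hinjkey k j (by omega) (by omega) heq.symm
    have hcc := Finset.card_le_card_of_injOn _ hmap hinj
    rw [Nat.card_Iio] at hcc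
    simpa using hcc
  omega




/-- **Lemma 2.3.** There is a function `f` such that every finite noncyclic `p`-group that can
be covered by `m` cyclic subgroups has order at most `f m`. -/
theorem noncyclic_p_group_covered_by_cyclic_bounded :
    ∃ f : ℕ → ℕ,
      ∀ (m p : ℕ), p.Prime →
      ∀ (G : Type) (_ : Group G) (_ : Finite G), IsPGroup p G → ¬ IsCyclic G →
      (∃ C : Fin m → Subgroup G, (∀ i, IsCyclic ↥(C i)) ∧
          ∀ g : G, g ∈ ⋃ i, ((C i : Subgroup G) : Set G)) →
      Nat.card G ≤ f m := by
  classical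
  refine ⟨fun m => m ^ (m + 3) + m, ?_⟩
  intro m p hp G _ _ hpg hnc hcov
  obtain ⟨C, hcyc, hcover⟩ := hcov
  haveI : Fact p.Prime := ⟨hp⟩
  have hcover' : ∀ g : G, ∃ i, g ∈ C i := by
    intro g
    have h := hcover g
    rw [Set.mem_iUnion] at h
    exact h
  rcases Nat.eq_zero_or_pos m with hm0 | hmpos
  · exfalso
    subst hm0
    obtain ⟨i, -⟩ := hcover' 1
    exact i.elim0
  have hpow : ∀ i, ∃ a : ℕ, Nat.card (C i) = p ^ a := fun i =>
    IsPGroup.iff_card.mp (hpg.to_subgroup (C i))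
  choose eC heC using hpow
  obtain ⟨i0, -, hi0⟩ := Finset.exists_max_image (Finset.univ : Finset (Fin m)) eC
    ⟨⟨0, hmpos⟩, Finset.mem_univ _⟩
  set e := eC i0 with he
  have hemax : ∀ i, eC i ≤ e := fun i => hi0 i (Finset.mem_univ i)
  obtain ⟨γ, hγ⟩ := (hcyc i0).exists_generator
  set x : G := (γ : G) with hxdef
  have hxord : orderOf x = p ^ e := by
    have htop : zpowers γ = (⊤ : Subgroup (C i0)) := by
      rw [Subgroup.eq_top_iff']
      exact hγ
    have h1 : orderOf γ = Nat.card (C i0) := by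
      rw [← Nat.card_zpowers γ, htop, Subgroup.card_top]
    rw [hxdef, orderOf_coe, h1, heC]
  have hproper : ∀ i, C i ≠ ⊤ := by
    intro i htop
    apply hnc
    obtain ⟨δ, hδ⟩ := (hcyc i).exists_generator
    refine ⟨⟨(δ : G), fun g => ?_⟩⟩
    have hg : g ∈ C i := by rw [htop]; trivial
    obtain ⟨n, hn⟩ := hδ ⟨g, hg⟩
    refine ⟨n, ?_⟩
    have := congrArg (Subtype.val) hn
    simpa using this
  letI : Fintype G := Fintype.ofFinite G
  have hsum : Nat.card G ≤ ∑ i : Fin m, Nat.card (C i) := by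
    have huniv : (Finset.univ : Finset G) ⊆
        Finset.univ.biUnion (fun i : Fin m => ((C i : Set G)).toFinset) := by
      intro g _
      obtain ⟨i, hi⟩ := hcover' g
      exact Finset.mem_biUnion.mpr ⟨i, Finset.mem_univ _, Set.mem_toFinset.mpr hi⟩
    calc Nat.card G = (Finset.univ : Finset G).card := by
          rw [Nat.card_eq_fintype_card, Finset.card_univ]
      _ ≤ (Finset.univ.biUnion (fun i : Fin m => ((C i : Set G)).toFinset)).card :=
          Finset.card_le_card huniv
      _ ≤ ∑ i : Fin m, ((C i : Set G)).toFinset.card := Finset.card_biUnion_le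
      _ = ∑ i : Fin m, Nat.card (C i) := by
          refine Finset.sum_congr rfl ?_
          intro i _
          rw [Set.toFinset_card, ← Nat.card_eq_fintype_card]
          rfl
  have hcards : ∀ i, Nat.card (C i) ≤ p ^ e := by
    intro i
    rw [heC]
    exact Nat.pow_le_pow_right hp.pos (hemax i)
  have hcover_card : Nat.card G ≤ m * p ^ e := by
    calc Nat.card G ≤ ∑ i : Fin m, Nat.card (C i) := hsum
      _ ≤ ∑ _i : Fin m, p ^ e := Finset.sum_le_sum (fun i _ => hcards i)
      _ = m * p ^ e := by
          rw [Finset.sum_const, Finset.card_univ, Fintype.card_fin, smul_eq_mul]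
  have hple : p ≤ m := by
    obtain ⟨n, hn⟩ := IsPGroup.iff_card.mp hpg
    have hstep : ∀ i, p * Nat.card (C i) ≤ Nat.card G := by
      intro i
      have hdvd : Nat.card (C i) ∣ Nat.card G := Subgroup.card_subgroup_dvd_card (C i)
      have hilt : eC i < n := by
        have hile : eC i ≤ n := by
          rw [heC, hn] at hdvd
          exact (Nat.pow_dvd_pow_iff_le_right hp.one_lt).mp hdvd
        rcases Nat.lt_or_ge (eC i) n with h | h
        · exact h
        · exfalso
          have heq : eC i = n := le_antisymm hile h
          apply hproper i
          apply Subgroup.eq_top_of_card_eq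
          rw [heC, heq, hn]
      calc p * Nat.card (C i) = p ^ (eC i + 1) := by rw [heC, pow_succ, Nat.mul_comm]
        _ ≤ p ^ n := Nat.pow_le_pow_right hp.pos (by omega)
        _ = Nat.card G := hn.symm
    have hmul : p * Nat.card G ≤ m * Nat.card G := by
      calc p * Nat.card G ≤ p * ∑ i : Fin m, Nat.card (C i) := Nat.mul_le_mul_left p hsum
        _ = ∑ i : Fin m, p * Nat.card (C i) := Finset.mul_sum _ _ _
        _ ≤ ∑ _i : Fin m, Nat.card G := Finset.sum_le_sum (fun i _ => hstep i)
        _ = m * Nat.card G := by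
            rw [Finset.sum_const, Finset.card_univ, Fintype.card_fin, smul_eq_mul]
    have hpos : 0 < Nat.card G := Nat.card_pos
    exact Nat.le_of_mul_le_mul_left (by rwa [Nat.mul_comm p, Nat.mul_comm m] at hmul) hpos
  have hmone : 1 ≤ m := hmpos
  rcases Nat.lt_or_ge e 2 with he2 | he2
  · calc Nat.card G ≤ m * p ^ e := hcover_card
      _ ≤ m * p ^ 1 := Nat.mul_le_mul_left m (Nat.pow_le_pow_right hp.pos (by omega))
      _ ≤ m * m := by
          rw [pow_one]
          exact Nat.mul_le_mul_left m hple
      _ ≤ m ^ (m + 3) + m := by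
          have h1 : m * m = m ^ 2 := (sq m).symm
          have h2 : m ^ 2 ≤ m ^ (m + 3) := Nat.pow_le_pow_right hmone (by omega)
          omega
  · have hebound : e ≤ m + 1 := by
      by_cases hcase1 : ∃ w : G, w ^ p = 1 ∧ w ∉ zpowers (x ^ (p ^ (e - 1)))
      · obtain ⟨w, hw1, hw2⟩ := hcase1
        have h := PGCover.antichain hp C hcyc hcover' hxord Nat.one_pos (by omega)
          (w := w) (by rw [pow_one]; exact hw1) hw2
        omega
      · by_cases hcase2 : ∃ w : G, w ^ (p ^ 2) = 1 ∧ w ∉ zpowers (x ^ (p ^ (e - 2)))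
        · obtain ⟨w, hw1, hw2⟩ := hcase2
          have h := PGCover.antichain hp C hcyc hcover' hxord (by norm_num) (by omega)
            (w := w) hw1 hw2
          omega
        · exfalso
          push_neg at hcase1 hcase2
          apply hnc
          refine PGCover.claimU hp (Nat.card G) G inferInstance inferInstance le_rfl hpg ?_ ?_
          · have hz : orderOf (x ^ (p ^ (e - 1))) = p := by
              rw [orderOf_pow, hxord, Nat.gcd_eq_right (pow_dvd_pow p (by omega)),
                Nat.pow_div (by omega) hp.pos, show e - (e - 1) = 1 by omega, pow_one]
            have hsub : {g : G | g ^ p = 1} ⊆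
                ((zpowers (x ^ (p ^ (e - 1))) : Subgroup G) : Set G) := fun g hg => hcase1 g hg
            calc {g : G | g ^ p = 1}.ncard
                ≤ ((zpowers (x ^ (p ^ (e - 1))) : Subgroup G) : Set G).ncard :=
                  Set.ncard_le_ncard hsub (Set.toFinite _)
              _ = p := by
                  rw [← Nat.card_coe_set_eq, SetLike.coe_sort_coe,
                    Nat.card_zpowers, hz]
          · have hz : orderOf (x ^ (p ^ (e - 2))) = p ^ 2 := by
              rw [orderOf_pow, hxord, Nat.gcd_eq_right (pow_dvd_pow p (by omega)),
                Nat.pow_div (by omega) hp.pos, show e - (e - 2) = 2 by omega]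
            have hsub : {g : G | g ^ (p ^ 2) = 1} ⊆
                ((zpowers (x ^ (p ^ (e - 2))) : Subgroup G) : Set G) := fun g hg => hcase2 g hg
            calc {g : G | g ^ (p ^ 2) = 1}.ncard
                ≤ ((zpowers (x ^ (p ^ (e - 2))) : Subgroup G) : Set G).ncard :=
                  Set.ncard_le_ncard hsub (Set.toFinite _)
              _ = p ^ 2 := by
                  rw [← Nat.card_coe_set_eq, SetLike.coe_sort_coe,
                    Nat.card_zpowers, hz]
    calc Nat.card G ≤ m * p ^ e := hcover_card
      _ ≤ m * p ^ (m + 1) := Nat.mul_le_mul_left m (Nat.pow_le_pow_right hp.pos hebound)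
      _ ≤ m * m ^ (m + 1) := Nat.mul_le_mul_left m (Nat.pow_le_pow_left hple _)
      _ = m ^ (m + 2) := by rw [← pow_succ']
      _ ≤ m ^ (m + 3) + m := by
          have h2 : m ^ (m + 2) ≤ m ^ (m + 3) := Nat.pow_le_pow_right hmone (by omega)
          omega
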